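/- Let k be an algebraically closed field of characteristic p > 0 and let h_1, h_2 be positive integers whose residues r_1 = h_1 mod p and r_2 = h_2 mod p satisfy r_1 + r_2 ≥ p + 2. Then for every pair of distinct elements P_1, P_2 of k, the rational function 1/((x − P_1)^{h_1}(x − P_2)^{h_2}) is exact. -/

import Mathlib

open Polynomial

/-- `HasDerivRF f g` means `g` is the formal derivative of the rational function `f` in `k(x)`:
if `f = u / v` with `v ≠ 0`, then `g = (u' v - u v') / v ^ 2`. -/
def HasDerivRF {k : Type*} [Field k] (f g : RatFunc k) : Prop :=
  ∃ u v : Polynomial k, v ≠ 0 ∧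
    f = algebraMap (Polynomial k) (RatFunc k) u / algebraMap (Polynomial k) (RatFunc k) v ∧
    g = algebraMap (Polynomial k) (RatFunc k)
          (Polynomial.derivative u * v - u * Polynomial.derivative v) /
        algebraMap (Polynomial k) (RatFunc k) (v ^ 2)

/-- A rational function is exact if it is the formal derivative of some rational function. -/
def IsExactRF {k : Type*} [Field k] (g : RatFunc k) : Prop := ∃ f : RatFunc k, HasDerivRF f g

section ExactAux

variable {k : Type*} [Field k]

lemma exact_add {g₁ g₂ : RatFunc k} (h₁ : IsExactRF g₁) (h₂ : IsExactRF g₂) :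
    IsExactRF (g₁ + g₂) := by
  obtain ⟨f₁, u₁, v₁, hv₁, hf₁, hg₁⟩ := h₁
  obtain ⟨f₂, u₂, v₂, hv₂, hf₂, hg₂⟩ := h₂
  have hA₁ := RatFunc.algebraMap_ne_zero hv₁
  have hA₂ := RatFunc.algebraMap_ne_zero hv₂
  refine ⟨f₁ + f₂, u₁ * v₂ + u₂ * v₁, v₁ * v₂, mul_ne_zero hv₁ hv₂, ?_, ?_⟩
  · subst hf₁ hf₂
    rw [map_add, map_mul, map_mul, map_mul]
    field_simp
  · subst hg₁ hg₂
    have e : derivative (u₁ * v₂ + u₂ * v₁) * (v₁ * v₂)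
        - (u₁ * v₂ + u₂ * v₁) * derivative (v₁ * v₂)
        = (derivative u₁ * v₁ - u₁ * derivative v₁) * v₂ ^ 2
          + (derivative u₂ * v₂ - u₂ * derivative v₂) * v₁ ^ 2 := by
      simp only [derivative_add, derivative_mul]; ring
    rw [e, map_add, map_mul, map_mul, mul_pow, map_mul, map_pow, map_pow]
    rw [div_add_div _ _ (pow_ne_zero 2 hA₁) (pow_ne_zero 2 hA₂)]
    field_simp

lemma exact_smul (c : k) {g : RatFunc k} (h : IsExactRF g) :
    IsExactRF (RatFunc.C c * g) := by
  obtain ⟨f, u, v, hv, hf, hg⟩ := h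
  refine ⟨RatFunc.C c * f, C c * u, v, hv, ?_, ?_⟩
  · subst hf; rw [map_mul, RatFunc.algebraMap_C, mul_div_assoc]
  · subst hg
    have e : derivative (C c * u) * v - C c * u * derivative v
        = C c * (derivative u * v - u * derivative v) := by
      simp only [derivative_C_mul]; ring
    rw [e, map_mul, RatFunc.algebraMap_C, mul_div_assoc]

lemma deriv_exact (u v : Polynomial k) (hv : v ≠ 0) :
    IsExactRF (algebraMap (Polynomial k) (RatFunc k)
        (derivative u * v - u * derivative v) /
      algebraMap (Polynomial k) (RatFunc k) (v ^ 2)) :=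
  ⟨_, u, v, hv, rfl, rfl⟩

lemma exact_ppow (p : ℕ) [CharP k p] (s t : Polynomial k) (ht : t ≠ 0)
    {g : RatFunc k} (h : IsExactRF g) :
    IsExactRF ((algebraMap (Polynomial k) (RatFunc k) s /
        algebraMap (Polynomial k) (RatFunc k) t) ^ p * g) := by
  obtain ⟨f, u, v, hv, hf, hg⟩ := h
  have hAt := RatFunc.algebraMap_ne_zero ht
  have hAv := RatFunc.algebraMap_ne_zero hv
  have hds : derivative (s ^ p) = 0 := by
    rw [derivative_pow]
    have : ((p : ℕ) : k) = 0 := CharP.cast_eq_zero k p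
    simp [this]
  have hdt : derivative (t ^ p) = 0 := by
    rw [derivative_pow]
    have : ((p : ℕ) : k) = 0 := CharP.cast_eq_zero k p
    simp [this]
  refine ⟨(algebraMap (Polynomial k) (RatFunc k) s /
        algebraMap (Polynomial k) (RatFunc k) t) ^ p * f,
      s ^ p * u, t ^ p * v, mul_ne_zero (pow_ne_zero _ ht) hv, ?_, ?_⟩
  · subst hf
    rw [map_mul, map_mul, map_pow, map_pow]
    field_simp
    rw [div_pow, div_mul_eq_mul_div, div_mul_cancel₀ _ (pow_ne_zero _ hAt), mul_comm]
  · subst hg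
    have e : derivative (s ^ p * u) * (t ^ p * v) - s ^ p * u * derivative (t ^ p * v)
        = (s ^ p * t ^ p) * (derivative u * v - u * derivative v) := by
      simp only [derivative_mul, hds, hdt]; ring
    rw [e]
    simp only [map_mul, map_pow]
    field_simp
    rw [div_pow, div_mul_eq_mul_div, div_mul_cancel₀ _ (pow_ne_zero _ hAt), mul_comm]

lemma Xsub_ne (a : k) : RatFunc.X - RatFunc.C a ≠ 0 := by
  rw [← RatFunc.algebraMap_X, ← RatFunc.algebraMap_C, ← map_sub]
  exact RatFunc.algebraMap_ne_zero (X_sub_C_ne_zero a)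

lemma relation (a b : k) (i j : ℕ) :
    IsExactRF (RatFunc.C ((i : k) + 1) *
        ((RatFunc.X - RatFunc.C a) ^ (i + 2) * (RatFunc.X - RatFunc.C b) ^ (j + 1))⁻¹
      + RatFunc.C ((j : k) + 1) *
        ((RatFunc.X - RatFunc.C a) ^ (i + 1) * (RatFunc.X - RatFunc.C b) ^ (j + 2))⁻¹) := by
  set v : Polynomial k := (X - C a) ^ (i + 1) * (X - C b) ^ (j + 1) with hvdef
  have hv : v ≠ 0 :=
    mul_ne_zero (pow_ne_zero _ (X_sub_C_ne_zero a)) (pow_ne_zero _ (X_sub_C_ne_zero b))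
  have h := deriv_exact (-1 : Polynomial k) v hv
  have hnum : derivative (-1 : Polynomial k) * v - (-1) * derivative v = derivative v := by
    simp
  have hdv : derivative v = C ((i : k) + 1) * ((X - C a) ^ i * (X - C b) ^ (j + 1))
      + C ((j : k) + 1) * ((X - C a) ^ (i + 1) * (X - C b) ^ j) := by
    simp only [hvdef, derivative_mul, derivative_pow, derivative_X_sub_C,
      Nat.add_sub_cancel, mul_one]
    push_cast
    ring
  rw [hnum, hdv] at h
  have hXa : RatFunc.X - RatFunc.C a ≠ 0 := Xsub_ne a
  have hXb : RatFunc.X - RatFunc.C b ≠ 0 := Xsub_ne b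
  have e : RatFunc.C ((i : k) + 1) *
        ((RatFunc.X - RatFunc.C a) ^ (i + 2) * (RatFunc.X - RatFunc.C b) ^ (j + 1))⁻¹
      + RatFunc.C ((j : k) + 1) *
        ((RatFunc.X - RatFunc.C a) ^ (i + 1) * (RatFunc.X - RatFunc.C b) ^ (j + 2))⁻¹
      = algebraMap (Polynomial k) (RatFunc k)
          (C ((i : k) + 1) * ((X - C a) ^ i * (X - C b) ^ (j + 1))
            + C ((j : k) + 1) * ((X - C a) ^ (i + 1) * (X - C b) ^ j)) /
        algebraMap (Polynomial k) (RatFunc k) (v ^ 2) := by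
    simp only [hvdef, map_add, map_mul, map_pow, map_sub, RatFunc.algebraMap_X,
      RatFunc.algebraMap_C]
    field_simp
    ring
  rw [e]
  exact h

lemma cast_ne_zero_of (p : ℕ) [CharP k p] {m : ℕ} (h0 : 0 < m) (hlt : m < p) :
    (m : k) ≠ 0 := by
  intro h
  have hd := (CharP.cast_eq_zero_iff k p m).mp h
  have := Nat.le_of_dvd h0 hd
  omega

lemma extract {c d : k} {F G : RatFunc k} (hc : c ≠ 0)
    (h : IsExactRF (RatFunc.C c * F + RatFunc.C d * G)) (hG : IsExactRF G) :
    IsExactRF F := by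
  have h2 := exact_add h (exact_smul (-d) hG)
  have e : RatFunc.C c * F + RatFunc.C d * G + RatFunc.C (-d) * G = RatFunc.C c * F := by
    rw [map_neg]; ring
  rw [e] at h2
  have h3 := exact_smul c⁻¹ h2
  rwa [← mul_assoc, ← map_mul, inv_mul_cancel₀ hc, map_one, one_mul] at h3

lemma main_ind (p : ℕ) [CharP k p] (a b : k) (s : ℕ) :
    ∀ d n : ℕ, 2 ≤ s → s + 2 ≤ p → s + d + n = p + s → s + d < p →
      IsExactRF (((RatFunc.X - RatFunc.C a) ^ (s + d) * (RatFunc.X - RatFunc.C b) ^ n)⁻¹) := by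
  intro d
  induction d with
  | zero =>
    intro n hs2 hsp hn hlt
    have hnp : n = p := by omega
    rw [hnp]
    obtain ⟨s'', rfl⟩ : ∃ t, s = t + 2 := ⟨s - 2, by omega⟩
    obtain ⟨q, hq⟩ : ∃ q, p = q + 1 := ⟨p - 1, by omega⟩
    have h := relation a b s'' q
    have hq0 : ((q : k) + 1) = 0 := by
      have h0 : ((p : ℕ) : k) = 0 := CharP.cast_eq_zero k p
      rw [hq] at h0; push_cast at h0; exact h0
    rw [hq0, map_zero, zero_mul, add_zero] at h
    have hc : ((s'' : k) + 1) ≠ 0 := by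
      have h1 : (((s'' + 1 : ℕ)) : k) ≠ 0 := cast_ne_zero_of p (by omega) (by omega)
      push_cast at h1; exact h1
    have h2 := exact_smul (((s'' : k) + 1))⁻¹ h
    rw [← mul_assoc, ← map_mul, inv_mul_cancel₀ hc, map_one, one_mul] at h2
    have e1 : s'' + 2 + 0 = s'' + 2 := by omega
    rw [e1, hq]
    exact h2
  | succ d ih =>
    intro n hs2 hsp hn hlt
    obtain ⟨n', rfl⟩ : ∃ n', n = n' + 1 := ⟨n - 1, by omega⟩
    obtain ⟨s'', rfl⟩ : ∃ t, s = t + 2 := ⟨s - 2, by omega⟩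
    have h := relation a b (s'' + d + 1) n'
    have hG := ih (n' + 2) hs2 hsp (by omega) (by omega)
    have e2 : s'' + 2 + d = s'' + d + 2 := by omega
    rw [e2] at hG
    have hc : (((s'' + d + 1 : ℕ) : k) + 1) ≠ 0 := by
      have h1 : (((s'' + d + 2 : ℕ)) : k) ≠ 0 := cast_ne_zero_of p (by omega) (by omega)
      push_cast at h1 ⊢
      intro h0; apply h1; linear_combination h0
    have hF := extract hc h hG
    have e3 : s'' + 2 + (d + 1) = s'' + d + 1 + 2 := by omega
    rw [e3]
    exact hF

end ExactAux

/-- If the residues mod `p` of `h₁, h₂` satisfy `r₁ + r₂ ≥ p + 2`, then for all distinct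
`P₁, P₂` the rational function `1/((x - P₁)^{h₁} (x - P₂)^{h₂})` is exact. -/
theorem stmt3 {k : Type*} [Field k] [IsAlgClosed k] (p : ℕ) [CharP k p] (hp : 0 < p)
    (h₁ h₂ : ℕ) (hpos₁ : 0 < h₁) (hpos₂ : 0 < h₂)
    (hres : p + 2 ≤ h₁ % p + h₂ % p) :
    ∀ P₁ P₂ : k, P₁ ≠ P₂ →
      IsExactRF (((RatFunc.X - RatFunc.C P₁) ^ h₁ * (RatFunc.X - RatFunc.C P₂) ^ h₂)⁻¹) := by
  intro P₁ P₂ _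
  have hr₁ : h₁ % p < p := Nat.mod_lt _ hp
  have hr₂ : h₂ % p < p := Nat.mod_lt _ hp
  set s : ℕ := h₁ % p + h₂ % p - p with hs
  have hF := main_ind p P₁ P₂ s (h₁ % p - s) (h₂ % p) (by omega) (by omega) (by omega)
    (by omega)
  have e : s + (h₁ % p - s) = h₁ % p := by omega
  rw [e] at hF
  have ht : ((X - C P₁) ^ (h₁ / p) * (X - C P₂) ^ (h₂ / p) : Polynomial k) ≠ 0 :=
    mul_ne_zero (pow_ne_zero _ (X_sub_C_ne_zero _)) (pow_ne_zero _ (X_sub_C_ne_zero _))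
  have h2 := exact_ppow p 1 _ ht hF
  have hXa := Xsub_ne (k := k) P₁
  have hXb := Xsub_ne (k := k) P₂
  have eq1 : ((RatFunc.X - RatFunc.C P₁) ^ h₁ * (RatFunc.X - RatFunc.C P₂) ^ h₂)⁻¹
      = (algebraMap (Polynomial k) (RatFunc k) 1 /
          algebraMap (Polynomial k) (RatFunc k)
            ((X - C P₁) ^ (h₁ / p) * (X - C P₂) ^ (h₂ / p))) ^ p *
        ((RatFunc.X - RatFunc.C P₁) ^ (h₁ % p) * (RatFunc.X - RatFunc.C P₂) ^ (h₂ % p))⁻¹ := by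
    rw [map_one]
    simp only [map_mul, map_pow, map_sub, RatFunc.algebraMap_X, RatFunc.algebraMap_C]
    have e₁ : h₁ = p * (h₁ / p) + h₁ % p := (Nat.div_add_mod h₁ p).symm
    have e₂ : h₂ = p * (h₂ / p) + h₂ % p := (Nat.div_add_mod h₂ p).symm
    nth_rewrite 1 [e₁]
    nth_rewrite 1 [e₂]
    rw [pow_add, pow_add, Nat.mul_comm, pow_mul, Nat.mul_comm p (h₂ / p), pow_mul]
    field_simp
    rw [← mul_pow, ← mul_pow, mul_one_div_cancel (mul_ne_zero (pow_ne_zero _ hXa) (pow_ne_zero _ hXb)), one_pow]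
  rw [eq1]
  exact h2
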